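/- For every word u ∈ A*, every integer k ≥ 0 and all letters a_1,…,a_k ∈ A, one has binom_q(u, a_1⋯a_k) = Σ q^{Σ_{i=1}^k i·|u_i|}, where the outer sum ranges over all factorizations u = u_0 a_1 u_1 a_2 ⋯ u_{k-1} a_k u_k with u_0, u_1, …, u_k ∈ A*. -/
import Mathlib


noncomputable def qbinAux {A : Type*} [DecidableEq A] : List A → List A → Polynomial ℕ
  | _, [] => 1
  | [], _ :: _ => 0
  | a :: u, b :: v =>
      Polynomial.X ^ (v.length + 1) * qbinAux u (b :: v) +
        (if a = b then qbinAux u v else 0)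

/-- The `q`-binomial coefficient `binom_q(u,v)` of two words. -/
noncomputable def qbin {A : Type*} [DecidableEq A] (u v : List A) : Polynomial ℕ :=
  qbinAux u.reverse v.reverse

/-- `glue [u₀, u₁, …, u_k] [a₁, …, a_k] = u₀ a₁ u₁ a₂ ⋯ u_{k-1} a_k u_k`,
the word obtained by interleaving the blocks `uᵢ` with the letters `aᵢ`. -/
def glue {A : Type*} : List (List A) → List A → List A
  | [], as => as
  | u0 :: us, [] => u0 ++ glue us []
  | u0 :: us, a :: as => u0 ++ a :: glue us as

/-- The weight `Σ_{i} i·|uᵢ|` of a factorization `[u₀, u₁, …, u_k]`. -/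
def qweight {A : Type*} (us : List (List A)) : ℕ :=
  ∑ i ∈ Finset.range us.length, i * (us.getD i []).length

/-! ### Auxiliary lemmas -/

lemma qbinAux_nil_right {A : Type*} [DecidableEq A] (u : List A) : qbinAux u [] = 1 := by
  cases u <;> simp [qbinAux]

lemma qbinAux_nil_left {A : Type*} [DecidableEq A] (b : A) (v : List A) :
    qbinAux [] (b :: v) = 0 := by
  simp [qbinAux]

lemma qbinAux_eq_zero {A : Type*} [DecidableEq A] (u : List A) :
    ∀ v : List A, u.length < v.length → qbinAux u v = 0 := by
  induction u with
  | nil =>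
    intro v hv
    cases v with
    | nil => simp at hv
    | cons b v => simp [qbinAux]
  | cons a u ih =>
    intro v hv
    cases v with
    | nil => simp at hv
    | cons b v =>
      simp only [List.length_cons, Nat.add_lt_add_iff_right] at hv
      simp only [qbinAux]
      rw [ih (b :: v) (by simp; omega), ih v hv]
      simp

lemma qbinAux_snoc {A : Type*} [DecidableEq A] (a b : A) (w : List A) :
    ∀ x : List A,
      qbinAux (w ++ [a]) (x ++ [b]) =
        qbinAux w (x ++ [b]) +
          (if a = b then Polynomial.X ^ (w.length - x.length) * qbinAux w x else 0) := by
  induction w with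
  | nil =>
    intro x
    cases x with
    | nil => simp [qbinAux]
    | cons d x' =>
      simp only [List.nil_append, List.cons_append, List.length_nil, List.length_cons]
      simp only [qbinAux]
      rw [qbinAux_eq_zero [] (x' ++ [b]) (by simp)]
      simp
  | cons c w' ih =>
    intro x
    cases x with
    | nil =>
      simp only [List.cons_append, List.nil_append]
      simp only [qbinAux]
      rw [show ([b] : List A) = [] ++ [b] from rfl, ih []]
      simp only [List.nil_append, qbinAux_nil_right, List.length_nil, List.length_cons,
        Nat.sub_zero]
      split_ifs <;> ring
    | cons d x' =>
      simp only [List.cons_append]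
      simp only [qbinAux]
      rw [show (d :: (x' ++ [b])) = (d :: x') ++ [b] from rfl, ih (d :: x'), ih x']
      simp only [List.length_append, List.length_cons, List.length_nil]
      have e3 : w'.length + 1 - (x'.length + 1) = w'.length - x'.length :=
        Nat.succ_sub_succ _ _
      rw [e3]
      by_cases hlen : x'.length + 1 ≤ w'.length
      · obtain ⟨k, hk⟩ : ∃ k, w'.length = x'.length + 1 + k := ⟨w'.length - (x'.length + 1), by omega⟩
        have e1 : w'.length - (x'.length + 1) = k := by omega
        have e2 : w'.length - x'.length = k + 1 := by omega
        rw [e1, e2]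
        split_ifs <;> ring
      · rw [qbinAux_eq_zero w' (d :: x') (by simp; omega)]
        split_ifs <;> ring

lemma qbin_nil_right {A : Type*} [DecidableEq A] (u : List A) : qbin u [] = 1 := by
  simp [qbin, qbinAux_nil_right]

lemma qbin_eq_zero {A : Type*} [DecidableEq A] (u v : List A) (h : u.length < v.length) :
    qbin u v = 0 :=
  qbinAux_eq_zero _ _ (by simpa using h)

lemma qbin_cons {A : Type*} [DecidableEq A] (a b : A) (u v : List A) :
    qbin (a :: u) (b :: v) =
      qbin u (b :: v) +
        (if a = b then Polynomial.X ^ (u.length - v.length) * qbin u v else 0) := by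
  unfold qbin
  simp only [List.reverse_cons]
  rw [qbinAux_snoc]
  simp

/-- The finite set of factorizations of `u` along `v`. -/
def facts {A : Type*} [DecidableEq A] : List A → List A → Finset (List (List A))
  | u, [] => {[u]}
  | [], _ :: _ => ∅
  | a :: u, b :: v =>
      ((facts u (b :: v)).image fun us => (a :: us.headI) :: us.tail) ∪
        (if a = b then (facts u v).image fun us => [] :: us else ∅)

lemma glue_length {A : Type*} (us : List (List A)) :
    ∀ v : List A, (glue us v).length = (us.map List.length).sum + v.length := by
  induction us with
  | nil => intro v; simp [glue]
  | cons u0 us ih =>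
    intro v
    cases v with
    | nil => simp [glue, ih]
    | cons a as => simp [glue, ih]; omega

lemma sum_getD_length {A : Type*} (rest : List (List A)) :
    ∑ i ∈ Finset.range rest.length, (rest.getD i []).length = (rest.map List.length).sum := by
  induction rest with
  | nil => simp
  | cons r rs ih =>
    rw [List.length_cons, Finset.sum_range_succ']
    simp only [List.getD_cons_succ, List.getD_cons_zero, List.map_cons, List.sum_cons, ih]
    omega

lemma qweight_cons {A : Type*} (w : List A) (rest : List (List A)) :
    qweight (w :: rest) = qweight rest + (rest.map List.length).sum := by
  unfold qweight
  rw [List.length_cons, Finset.sum_range_succ']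
  simp only [List.getD_cons_succ, List.getD_cons_zero, Nat.zero_mul, Nat.add_zero]
  rw [← sum_getD_length rest, ← Finset.sum_add_distrib]
  congr 1
  ext i
  ring

lemma mem_facts {A : Type*} [DecidableEq A] (u : List A) :
    ∀ (v : List A) (us : List (List A)),
      us ∈ facts u v ↔ (us.length = v.length + 1 ∧ glue us v = u) := by
  induction u with
  | nil =>
    intro v us
    cases v with
    | nil =>
      simp only [facts, Finset.mem_singleton, List.length_nil]
      constructor
      · rintro rfl; exact ⟨rfl, rfl⟩
      · rintro ⟨h1, h2⟩
        obtain ⟨w, rfl⟩ := List.length_eq_one_iff.mp h1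
        have : glue [w] ([] : List A) = w := by simp [glue]
        rw [this] at h2
        rw [h2]
    | cons b v =>
      simp only [facts, Finset.notMem_empty, false_iff, not_and]
      intro h1 h2
      have := glue_length us (b :: v)
      rw [h2] at this
      simp only [List.length_nil, List.length_cons] at this
      omega
  | cons a u ih =>
    intro v us
    cases v with
    | nil =>
      simp only [facts, Finset.mem_singleton, List.length_nil]
      constructor
      · rintro rfl; exact ⟨rfl, by simp [glue]⟩
      · rintro ⟨h1, h2⟩
        obtain ⟨w, rfl⟩ := List.length_eq_one_iff.mp h1
        have : glue [w] ([] : List A) = w := by simp [glue]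
        rw [this] at h2
        rw [h2]
    | cons b v =>
      simp only [facts]
      by_cases hab : a = b
      · subst hab
        rw [if_pos rfl]
        simp only [Finset.mem_union, Finset.mem_image]
        constructor
        · rintro (⟨ws, hws, rfl⟩ | ⟨ws, hws, rfl⟩)
          · obtain ⟨h1, h2⟩ := (ih (a :: v) ws).mp hws
            have hne : ws ≠ [] := by intro h; subst h; simp at h1
            obtain ⟨w0, ws', rfl⟩ := List.exists_cons_of_ne_nil hne
            refine ⟨by simpa using h1, ?_⟩
            simp only [List.headI_cons, List.tail_cons]
            rw [show glue ((a :: w0) :: ws') (a :: v) = (a :: w0) ++ a :: glue ws' v from rfl]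
            rw [show glue (w0 :: ws') (a :: v) = w0 ++ a :: glue ws' v from rfl] at h2
            simpa using h2
          · obtain ⟨h1, h2⟩ := (ih v ws).mp hws
            refine ⟨by simpa using h1, ?_⟩
            rw [show glue ([] :: ws) (a :: v) = [] ++ a :: glue ws v from rfl]
            simp [h2]
        · rintro ⟨h1, h2⟩
          have hne : us ≠ [] := by intro h; subst h; simp at h1
          obtain ⟨w0, ws, rfl⟩ := List.exists_cons_of_ne_nil hne
          rw [show glue (w0 :: ws) (a :: v) = w0 ++ a :: glue ws v from rfl] at h2
          cases w0 with
          | nil =>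
            simp only [List.nil_append, List.cons.injEq] at h2
            right
            exact ⟨ws, (ih v ws).mpr ⟨by simpa using h1, h2.2⟩, rfl⟩
          | cons c w0' =>
            simp only [List.cons_append, List.cons.injEq] at h2
            obtain ⟨rfl, h2⟩ := h2
            left
            exact ⟨w0' :: ws, (ih (c :: v) (w0' :: ws)).mpr ⟨by simpa using h1, h2⟩, rfl⟩
      · rw [if_neg hab]
        rw [Finset.union_empty]
        simp only [Finset.mem_image]
        constructor
        · rintro ⟨ws, hws, rfl⟩
          obtain ⟨h1, h2⟩ := (ih (b :: v) ws).mp hws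
          have hne : ws ≠ [] := by intro h; subst h; simp at h1
          obtain ⟨w0, ws', rfl⟩ := List.exists_cons_of_ne_nil hne
          refine ⟨by simpa using h1, ?_⟩
          simp only [List.headI_cons, List.tail_cons]
          rw [show glue ((a :: w0) :: ws') (b :: v) = (a :: w0) ++ b :: glue ws' v from rfl]
          rw [show glue (w0 :: ws') (b :: v) = w0 ++ b :: glue ws' v from rfl] at h2
          simpa using h2
        · rintro ⟨h1, h2⟩
          have hne : us ≠ [] := by intro h; subst h; simp at h1
          obtain ⟨w0, ws, rfl⟩ := List.exists_cons_of_ne_nil hne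
          rw [show glue (w0 :: ws) (b :: v) = w0 ++ b :: glue ws v from rfl] at h2
          cases w0 with
          | nil =>
            simp only [List.nil_append, List.cons.injEq] at h2
            exact absurd h2.1.symm hab
          | cons c w0' =>
            simp only [List.cons_append, List.cons.injEq] at h2
            obtain ⟨rfl, h2⟩ := h2
            exact ⟨w0' :: ws, (ih (b :: v) (w0' :: ws)).mpr ⟨by simpa using h1, h2⟩, rfl⟩

lemma qbin_eq_sum_facts {A : Type*} [DecidableEq A] (u : List A) :
    ∀ v : List A, qbin u v = ∑ us ∈ facts u v, (Polynomial.X : Polynomial ℕ) ^ qweight us := by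
  induction u with
  | nil =>
    intro v
    cases v with
    | nil =>
      rw [qbin_nil_right]
      simp [facts, qweight]
    | cons b v =>
      rw [qbin_eq_zero _ _ (by simp)]
      simp [facts]
  | cons a u ih =>
    intro v
    cases v with
    | nil =>
      rw [qbin_nil_right]
      simp [facts, qweight]
    | cons b v =>
      rw [qbin_cons, ih (b :: v), ih v]
      rw [show facts (a :: u) (b :: v) =
          ((facts u (b :: v)).image fun us => (a :: us.headI) :: us.tail) ∪
            (if a = b then (facts u v).image fun us => [] :: us else ∅) from rfl]
      have hdisj : Disjoint ((facts u (b :: v)).image fun us => (a :: us.headI) :: us.tail)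
          (if a = b then (facts u v).image fun us => [] :: us else ∅) := by
        split_ifs
        · rw [Finset.disjoint_left]
          rintro x hx hx'
          obtain ⟨ws, _, rfl⟩ := Finset.mem_image.mp hx
          obtain ⟨ws', _, h⟩ := Finset.mem_image.mp hx'
          simp at h
        · exact Finset.disjoint_empty_right _
      rw [Finset.sum_union hdisj]
      congr 1
      · rw [Finset.sum_image]
        · apply Finset.sum_congr rfl
          intro us hus
          obtain ⟨h1, h2⟩ := (mem_facts u (b :: v) us).mp hus
          have hne : us ≠ [] := by intro h; subst h; simp at h1
          obtain ⟨w0, ws, rfl⟩ := List.exists_cons_of_ne_nil hne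
          simp only [List.headI_cons, List.tail_cons]
          rw [qweight_cons, qweight_cons]
        · intro x hx y hy hxy
          have hxne : x ≠ [] := by
            intro h; subst h
            have := ((mem_facts u (b :: v) []).mp hx).1; simp at this
          have hyne : y ≠ [] := by
            intro h; subst h
            have := ((mem_facts u (b :: v) []).mp hy).1; simp at this
          obtain ⟨x0, xs, rfl⟩ := List.exists_cons_of_ne_nil hxne
          obtain ⟨y0, ys, rfl⟩ := List.exists_cons_of_ne_nil hyne
          simp only [List.headI_cons, List.tail_cons, List.cons.injEq] at hxy
          obtain ⟨⟨_, rfl⟩, rfl⟩ := hxy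
          rfl
      · split_ifs with hab
        · rw [Finset.sum_image (by intro x _ y _ h; simpa using h)]
          rw [Finset.mul_sum]
          apply Finset.sum_congr rfl
          intro us hus
          obtain ⟨h1, h2⟩ := (mem_facts u v us).mp hus
          rw [qweight_cons, ← pow_add]
          congr 1
          have := glue_length us v
          rw [h2] at this
          omega
        · simp

theorem qbin_eq_sum_factorizations (A : Type*) [Fintype A] [DecidableEq A]
    (u v : List A) :
    qbin u v =
      ∑ᶠ us ∈ {us : List (List A) | us.length = v.length + 1 ∧ glue us v = u},
        (Polynomial.X : Polynomial ℕ) ^ qweight us := by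
  have hset : {us : List (List A) | us.length = v.length + 1 ∧ glue us v = u} =
      ↑(facts u v) := by
    ext us
    simp [mem_facts]
  rw [hset, finsum_mem_coe_finset]
  exact qbin_eq_sum_facts u v
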